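/- arXiv:2204.08833 — 6 statements merged into one kernel-verified Lean document; each statement's English description precedes it below -/
import Mathlib

section
/- Let X be a Tychonoff space and let M be a maximal ideal of C(X,ℝ) such that there exists g ∉ M with f·g bounded for every f ∈ C(X,ℝ). If ψ : C(X,ℝ) →+* C(Y,ℝ) is a ring isomorphism, then ψ(M) also has this property: there exists h ∉ ψ(M) with k·h bounded for every k ∈ C(Y,ℝ). -/
lemma bdd_iff_alg {Z : Type*} [TopologicalSpace Z] (f : C(Z, ℝ)) :
    (∃ C : ℝ, ∀ z : Z, |f z| ≤ C) ↔
      ∃ (n : ℕ) (k : C(Z, ℝ)), ((n : C(Z, ℝ)))^2 = f^2 + k^2 := by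
  constructor
  · rintro ⟨C, hC⟩
    obtain ⟨n, hn⟩ := exists_nat_ge C
    have hnn : ∀ z : Z, (0:ℝ) ≤ (n:ℝ)^2 - (f z)^2 := by
      intro z
      have h1 : |f z| ≤ (n:ℝ) := (hC z).trans hn
      nlinarith [abs_nonneg (f z), sq_abs (f z)]
    refine ⟨n, ⟨fun z => Real.sqrt ((n:ℝ)^2 - (f z)^2), by fun_prop⟩, ?_⟩
    ext z
    simp only [ContinuousMap.add_apply, ContinuousMap.pow_apply, ContinuousMap.coe_mk,
      ContinuousMap.natCast_apply]
    rw [Real.sq_sqrt (hnn z)]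
    ring
  · rintro ⟨n, k, hk⟩
    refine ⟨n, fun z => ?_⟩
    have := congrArg (fun h : C(Z, ℝ) => h z) hk
    simp only [ContinuousMap.add_apply, ContinuousMap.pow_apply,
      ContinuousMap.natCast_apply] at this
    have h2 : (f z)^2 ≤ (n:ℝ)^2 := by nlinarith [sq_nonneg (k z)]
    have := abs_le_abs (a := f z) (b := (n:ℝ)) ?_ ?_
    · simpa using this
    · nlinarith [abs_nonneg (f z), le_abs_self (f z)]
    · nlinarith [neg_abs_le (f z), neg_le_abs (f z)]

theorem stmt_6 {X Y : Type*} [TopologicalSpace X] [T35Space X] [TopologicalSpace Y]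
    (M : Ideal C(X, ℝ)) (hM : M.IsMaximal) (g : C(X, ℝ)) (hg : g ∉ M)
    (hbdd : ∀ f : C(X, ℝ), ∃ C : ℝ, ∀ x : X, |(f * g) x| ≤ C)
    (ψ : C(X, ℝ) ≃+* C(Y, ℝ)) :
    ∃ h : C(Y, ℝ), h ∉ Ideal.map (ψ : C(X, ℝ) →+* C(Y, ℝ)) M ∧
      ∀ k : C(Y, ℝ), ∃ C : ℝ, ∀ y : Y, |(k * h) y| ≤ C := by
  refine ⟨ψ g, ?_, ?_⟩
  · intro hmem
    rw [Ideal.mem_map_iff_of_surjective (ψ : C(X, ℝ) →+* C(Y, ℝ)) ψ.surjective] at hmem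
    obtain ⟨m, hm, hme⟩ := hmem
    exact hg (ψ.injective hme ▸ hm)
  · intro k
    obtain ⟨n, w, hw⟩ := (bdd_iff_alg (ψ.symm k * g)).mp (hbdd (ψ.symm k))
    rw [bdd_iff_alg]
    refine ⟨n, ψ w, ?_⟩
    have := congrArg ψ hw
    simpa [map_pow, map_mul, map_add, map_natCast] using this
end

section
/- Let X and Y be topological spaces and ψ : C(X,ℝ) →+* C(Y,ℝ) a ring isomorphism. If f ∈ C(X,ℝ) is bounded, then ψ(f) is bounded. -/
theorem stmt_7 {X Y : Type*} [TopologicalSpace X] [TopologicalSpace Y]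
    (ψ : C(X, ℝ) ≃+* C(Y, ℝ)) (f : C(X, ℝ)) (hf : ∃ C : ℝ, ∀ x : X, |f x| ≤ C) :
    ∃ C : ℝ, ∀ y : Y, |ψ f y| ≤ C := by
  obtain ⟨C, hC⟩ := hf
  obtain ⟨n, hn⟩ := exists_nat_ge (C ^ 2)
  have hfx : ∀ x : X, f x ^ 2 ≤ (n : ℝ) := by
    intro x
    calc f x ^ 2 = |f x| ^ 2 := (sq_abs _).symm
    _ ≤ C ^ 2 := by
        have := hC x
        nlinarith [abs_nonneg (f x)]
    _ ≤ n := hn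
  -- h = sqrt (n - f²), continuous, with h² = n - f²
  set h : C(X, ℝ) := ⟨fun x => Real.sqrt ((n : ℝ) - f x ^ 2),
    Real.continuous_sqrt.comp (continuous_const.sub ((f.continuous.pow 2)))⟩ with hh
  have key : (n : C(X, ℝ)) - f * f = h * h := by
    ext x
    simp only [ContinuousMap.sub_apply, ContinuousMap.mul_apply, hh,
      ContinuousMap.coe_mk, ContinuousMap.natCast_apply]
    rw [Real.mul_self_sqrt (by nlinarith [hfx x] : (0:ℝ) ≤ (n : ℝ) - f x ^ 2)]
    ring
  have key2 : (n : C(Y, ℝ)) - ψ f * ψ f = ψ h * ψ h := by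
    have := congrArg ψ key
    simpa [map_sub, map_mul, map_natCast] using this
  refine ⟨Real.sqrt n, fun y => ?_⟩
  have := congrFun (congrArg (fun g : C(Y, ℝ) => (g : Y → ℝ)) key2) y
  simp only [ContinuousMap.sub_apply, ContinuousMap.mul_apply,
    ContinuousMap.natCast_apply] at this
  have hle : ψ f y ^ 2 ≤ (n : ℝ) := by nlinarith [sq_nonneg (ψ h y)]
  have : |ψ f y| = Real.sqrt (ψ f y ^ 2) := (Real.sqrt_sq_eq_abs _).symm
  rw [this]
  exact Real.sqrt_le_sqrt hle
end

section
/- Let X be a Tychonoff space and P a set of maximal ideals of C(X,ℝ). Suppose every ideal in P is fixed (X is 'P-compact'), and let N_P(X) = {x ∈ X : M_x ∉ P}. Then the map σ : X \ N_P(X) → P, σ(x) = M_x, is a homeomorphism, where P carries the hull-kernel topology (basic closed sets {M ∈ P : f ∈ M} for f ∈ C(X,ℝ)) and X \ N_P(X) carries the subspace topology. -/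
/-- Evaluation at a point as a ring homomorphism `C(X,ℝ) →+* ℝ`. -/
def evalHom (X : Type*) [TopologicalSpace X] (x : X) : C(X, ℝ) →+* ℝ :=
  (Pi.evalRingHom (fun _ : X => ℝ) x).comp ContinuousMap.coeFnRingHom

/-- The fixed maximal ideal `M_x = {f : f x = 0}` as a point of the maximal spectrum. -/
def maxIdealAt (X : Type*) [TopologicalSpace X] (x : X) : MaximalSpectrum C(X, ℝ) :=
  ⟨RingHom.ker (evalHom X x),
    RingHom.ker_isMaximal_of_surjective (evalHom X x)
      (fun r => ⟨ContinuousMap.const X r, rfl⟩)⟩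

lemma mem_maxIdealAt {X : Type*} [TopologicalSpace X] {x : X} {f : C(X, ℝ)} :
    f ∈ (maxIdealAt X x).asIdeal ↔ f x = 0 := by
  simp [maxIdealAt, RingHom.mem_ker, evalHom]

lemma maxIdealAt_injective {X : Type*} [TopologicalSpace X] [T35Space X] :
    Function.Injective (maxIdealAt X) := by
  intro x y hxy
  by_contra hne
  obtain ⟨f, f_cont, f_zero, f_one⟩ :=
    CompletelyRegularSpace.completely_regular x {y} isClosed_singleton hne
  set g : C(X, ℝ) := ⟨fun z => (f z : ℝ), continuous_subtype_val.comp f_cont⟩ with hg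
  have hgx : g ∈ (maxIdealAt X x).asIdeal := by
    rw [mem_maxIdealAt]
    simp [hg, f_zero]
  rw [hxy, mem_maxIdealAt] at hgx
  have : f y = 1 := f_one rfl
  simp [hg, this] at hgx

lemma maxIdealAt_continuous {X : Type*} [TopologicalSpace X] :
    Continuous (maxIdealAt X) := by
  rw [MaximalSpectrum.zariskiTopology, continuous_induced_rng]
  rw [continuous_iff_isClosed]
  intro s hs
  obtain ⟨t, rfl⟩ := (PrimeSpectrum.isClosed_iff_zeroLocus s).mp hs
  have : (MaximalSpectrum.toPrimeSpectrum ∘ maxIdealAt X) ⁻¹' PrimeSpectrum.zeroLocus t =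
      ⋂ f ∈ t, (f : C(X, ℝ)) ⁻¹' {(0 : ℝ)} := by
    ext x
    simp only [Set.mem_preimage, PrimeSpectrum.mem_zeroLocus, Set.mem_iInter,
      Set.subset_def, SetLike.mem_coe]
    constructor
    · intro h f hf
      exact mem_maxIdealAt.mp (h f hf)
    · intro h f hf
      show f ∈ (maxIdealAt X x).asIdeal
      rw [mem_maxIdealAt]
      simpa using h f hf
  rw [this]
  exact isClosed_biInter fun f _ => isClosed_singleton.preimage f.continuous

theorem stmt_9 {X : Type*} [TopologicalSpace X] [T35Space X]
    (P : Set (MaximalSpectrum C(X, ℝ)))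
    (hfix : ∀ M ∈ P, ∃ x : X, M = maxIdealAt X x) :
    ∃ e : {x : X | maxIdealAt X x ∈ P} ≃ₜ P,
      ∀ x : {x : X | maxIdealAt X x ∈ P}, (e x : MaximalSpectrum C(X, ℝ)) = maxIdealAt X x := by
  set S : Set X := {x : X | maxIdealAt X x ∈ P} with hS
  set σ : S → P := fun x => ⟨maxIdealAt X x, x.2⟩ with hσ
  have hinj : Function.Injective σ := by
    intro a b hab
    have : maxIdealAt X (a : X) = maxIdealAt X (b : X) := congrArg Subtype.val hab
    exact Subtype.ext (maxIdealAt_injective this)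
  have hsurj : Function.Surjective σ := by
    rintro ⟨M, hM⟩
    obtain ⟨x, rfl⟩ := hfix M hM
    exact ⟨⟨x, hM⟩, rfl⟩
  have hcont : Continuous σ :=
    Continuous.subtype_mk (maxIdealAt_continuous.comp continuous_subtype_val) _
  have hopen : IsOpenMap σ := by
    intro U hU
    rw [isOpen_iff_forall_mem_open]
    rintro _ ⟨a, haU, rfl⟩
    obtain ⟨V, hV, hVU⟩ := isOpen_induced_iff.mp hU
    have haV : (a : X) ∈ V := by rw [← hVU] at haU; exact haU
    obtain ⟨f, f_cont, f_zero, f_one⟩ :=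
      CompletelyRegularSpace.completely_regular (a : X) Vᶜ hV.isClosed_compl
        (by simpa using haV)
    set g : C(X, ℝ) := ⟨fun z => 1 - (f z : ℝ),
      continuous_const.sub (continuous_subtype_val.comp f_cont)⟩ with hg
    refine ⟨Subtype.val ⁻¹' (MaximalSpectrum.toPrimeSpectrum ⁻¹'
      (PrimeSpectrum.zeroLocus {g})ᶜ), ?_, ?_, ?_⟩
    · rintro ⟨M, hM⟩ hMW
      obtain ⟨y, rfl⟩ := hfix M hM
      have hgy : g y ≠ 0 := by
        intro h0
        apply hMW
        simp only [Set.mem_preimage, PrimeSpectrum.mem_zeroLocus,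
          Set.singleton_subset_iff, SetLike.mem_coe]
        show g ∈ (maxIdealAt X y).asIdeal
        exact mem_maxIdealAt.mpr h0
      have hyV : y ∈ V := by
        by_contra hyV
        exact hgy (by simp [hg, show f y = 1 from f_one hyV])
      exact ⟨⟨y, hM⟩, hVU ▸ (show (y : X) ∈ V from hyV), rfl⟩
    · exact ((PrimeSpectrum.isClosed_zeroLocus _).isOpen_compl.preimage
        MaximalSpectrum.toPrimeSpectrum_continuous).preimage continuous_subtype_val
    · simp only [Set.mem_preimage, Set.mem_compl_iff, PrimeSpectrum.mem_zeroLocus,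
        Set.singleton_subset_iff, SetLike.mem_coe]
      intro hmem
      have : g ∈ (maxIdealAt X (a : X)).asIdeal := hmem
      rw [mem_maxIdealAt] at this
      simp [hg, f_zero] at this
  refine ⟨Equiv.toHomeomorphOfContinuousOpen (Equiv.ofBijective σ ⟨hinj, hsurj⟩)
    hcont hopen, fun x => rfl⟩
end

section
/- Let X be a Tychonoff space in which every maximal ideal of C(X,ℝ) is fixed. Then the map x ↦ M_x is a homeomorphism from X onto the maximal ideal space Max(C(X,ℝ)) equipped with the hull-kernel topology. -/
lemma mem_maxIdealAt_iff {X : Type*} [TopologicalSpace X] (x : X) (f : C(X, ℝ)) :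
    f ∈ (maxIdealAt X x).asIdeal ↔ f x = 0 := Iff.rfl

/-- From complete regularity: a continuous real function vanishing on a closed set `K`
and nonzero at a point `y ∉ K`. -/
lemma exists_vanish_on_closed {X : Type*} [TopologicalSpace X] [T35Space X]
    {K : Set X} (hK : IsClosed K) {y : X} (hy : y ∉ K) :
    ∃ f : C(X, ℝ), (∀ z ∈ K, f z = 0) ∧ f y ≠ 0 := by
  obtain ⟨f, cf, hfy, hfK⟩ := CompletelyRegularSpace.completely_regular y K hK hy
  refine ⟨⟨fun z => (f z : ℝ) - 1, by fun_prop⟩, ?_, ?_⟩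
  · intro z hz
    simp [hfK hz]
  · simp [hfy]

theorem stmt_10 {X : Type*} [TopologicalSpace X] [T35Space X]
    (hfix : ∀ M : MaximalSpectrum C(X, ℝ), ∃ x : X, M = maxIdealAt X x) :
    ∃ e : X ≃ₜ MaximalSpectrum C(X, ℝ), ∀ x : X, e x = maxIdealAt X x := by
  have hsurj : Function.Surjective (maxIdealAt X) := fun M =>
    (hfix M).imp fun x hx => hx.symm
  have hbij : Function.Bijective (maxIdealAt X) := ⟨maxIdealAt_injective, hsurj⟩
  let e0 : X ≃ MaximalSpectrum C(X, ℝ) := Equiv.ofBijective _ hbij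
  -- Continuity of `maxIdealAt`
  have hcont : Continuous (maxIdealAt X) := by
    rw [continuous_induced_rng]
    rw [continuous_iff_isClosed]
    intro C hC
    obtain ⟨S, rfl⟩ := (PrimeSpectrum.isClosed_iff_zeroLocus C).mp hC
    have : (MaximalSpectrum.toPrimeSpectrum ∘ maxIdealAt X) ⁻¹' PrimeSpectrum.zeroLocus S
        = ⋂ f ∈ S, (f : C(X, ℝ)) ⁻¹' {0} := by
      ext x
      simp only [Set.mem_preimage, Function.comp_apply, PrimeSpectrum.mem_zeroLocus,
        Set.mem_iInter]
      constructor
      · intro h f hf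
        exact h hf
      · intro h f hf
        exact h f hf
    rw [this]
    exact isClosed_biInter fun f _ => IsClosed.preimage f.continuous isClosed_singleton
  -- `maxIdealAt` is a closed map
  have hclosed : IsClosedMap (maxIdealAt X) := by
    intro C hC
    have key : maxIdealAt X '' C = MaximalSpectrum.toPrimeSpectrum ⁻¹'
        PrimeSpectrum.zeroLocus {f : C(X, ℝ) | ∀ z ∈ C, f z = 0} := by
      ext M
      simp only [Set.mem_image, Set.mem_preimage, PrimeSpectrum.mem_zeroLocus]
      constructor
      · rintro ⟨x, hxC, rfl⟩ f hf
        exact hf x hxC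
      · intro hM
        obtain ⟨y, rfl⟩ := hfix M
        refine ⟨y, ?_, rfl⟩
        by_contra hy
        obtain ⟨f, hfC, hfy⟩ := exists_vanish_on_closed hC hy
        exact hfy (hM hfC)
    rw [key]
    exact (PrimeSpectrum.isClosed_zeroLocus _).preimage
      MaximalSpectrum.toPrimeSpectrum_continuous
  have hcont' : Continuous e0.symm := by
    rw [continuous_iff_isClosed]
    intro C hC
    have : e0.symm ⁻¹' C = maxIdealAt X '' C := by
      ext M
      simp only [Set.mem_preimage, Set.mem_image]
      constructor
      · intro h
        exact ⟨e0.symm M, h, e0.apply_symm_apply M⟩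
      · rintro ⟨x, hx, rfl⟩
        simpa [e0] using hx
    rw [this]
    exact hclosed C hC
  exact ⟨⟨e0, hcont, hcont'⟩, fun x => rfl⟩
end

section
/- Let X and Y be Tychonoff spaces and suppose every maximal ideal of C(X,ℝ) is fixed and every maximal ideal of C(Y,ℝ) is fixed. If C(X,ℝ) and C(Y,ℝ) are isomorphic as rings, then X and Y are homeomorphic. -/
open ContinuousMap

def myEval {Z : Type*} [TopologicalSpace Z] (z : Z) : C(Z, ℝ) →+* ℝ where
  toFun f := f z
  map_one' := rfl
  map_mul' _ _ := rfl
  map_zero' := rfl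
  map_add' _ _ := rfl

lemma sep_point {Z : Type*} [TopologicalSpace Z] [T35Space Z] {a b : Z}
    (h : ∀ f : C(Z, ℝ), f a = f b) : a = b := by
  by_contra hne
  obtain ⟨f, fc, f0, f1⟩ := CompletelyRegularSpace.completely_regular a {b}
    isClosed_singleton hne
  have := h ⟨fun z => (f z : ℝ), continuous_subtype_val.comp fc⟩
  simp only [ContinuousMap.coe_mk] at this
  rw [f0, f1 rfl] at this
  norm_num at this

lemma const_pres {X Y : Type*} [TopologicalSpace X] [TopologicalSpace Y]
    (φ : C(X, ℝ) →+* C(Y, ℝ)) (c : ℝ) (y : Y) :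
    φ (ContinuousMap.const X c) y = c := by
  have h : (myEval y).comp (φ.comp (ContinuousMap.C (α := X) (A := ℝ))) = RingHom.id ℝ :=
    Subsingleton.elim _ _
  have := congrArg (fun ψ : ℝ →+* ℝ => ψ c) h
  simp only [RingHom.comp_apply, RingHom.id_apply] at this
  exact this

lemma point_map {X Y : Type*} [TopologicalSpace X] [TopologicalSpace Y]
    (hY : ∀ J : Ideal C(Y, ℝ), J.IsMaximal → ∃ y : Y, (J : Set C(Y, ℝ)) = {g : C(Y, ℝ) | g y = 0})
    (φ : C(X, ℝ) ≃+* C(Y, ℝ)) (x : X) :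
    ∃ y : Y, ∀ g : C(Y, ℝ), g y = φ.symm g x := by
  have hker : (RingHom.ker (myEval (Z := X) x)).IsMaximal :=
    RingHom.ker_isMaximal_of_surjective _ (fun c => ⟨ContinuousMap.const X c, rfl⟩)
  have hmax : (Ideal.comap (φ.symm : C(Y, ℝ) →+* C(X, ℝ))
      (RingHom.ker (myEval (Z := X) x))).IsMaximal :=
    Ideal.comap_isMaximal_of_surjective _ φ.symm.surjective
  obtain ⟨y, hy⟩ := hY _ hmax
  have hmem : ∀ g : C(Y, ℝ), φ.symm g x = 0 ↔ g y = 0 := by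
    intro g
    have h2 : g ∈ Ideal.comap (φ.symm : C(Y, ℝ) →+* C(X, ℝ))
        (RingHom.ker (myEval (Z := X) x)) ↔ g y = 0 := by
      rw [← SetLike.mem_coe, hy]; rfl
    rw [Ideal.mem_comap, RingHom.mem_ker] at h2
    exact h2
  refine ⟨y, fun g => ?_⟩
  set c := φ.symm g x with hc
  have h1 : φ.symm (g - ContinuousMap.const Y c) x = 0 := by
    rw [map_sub]
    have h3 : φ.symm (ContinuousMap.const Y c) x = c :=
      const_pres (φ.symm : C(Y, ℝ) →+* C(X, ℝ)) c x
    simp only [ContinuousMap.sub_apply]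
    rw [h3]; simp [hc]
  have := (hmem _).mp h1
  simpa [sub_eq_zero] using this

lemma cont_of_comp {X Y : Type*} [TopologicalSpace X] [TopologicalSpace Y] [T35Space Y]
    (σ : X → Y) (h : ∀ g : C(Y, ℝ), Continuous fun x => g (σ x)) : Continuous σ := by
  rw [continuous_iff_continuousAt]
  intro x
  intro U hU
  rw [Filter.mem_map]
  obtain ⟨U', hU'sub, hU'open, hxU'⟩ := mem_nhds_iff.mp hU
  obtain ⟨f, fc, f0, f1⟩ := CompletelyRegularSpace.completely_regular (σ x) U'ᶜ
    hU'open.isClosed_compl (by simpa using hxU')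
  set g : C(Y, ℝ) := ⟨fun y => (f y : ℝ), continuous_subtype_val.comp fc⟩ with hg
  have hV : IsOpen {x' : X | g (σ x') < 1 / 2} :=
    isOpen_lt (h g) continuous_const
  refine Filter.mem_of_superset (hV.mem_nhds ?_) ?_
  · show g (σ x) < 1 / 2
    simp only [hg, ContinuousMap.coe_mk, f0]
    norm_num
  · intro x' hx'
    have : σ x' ∈ U' := by
      by_contra hc
      have : g (σ x') = 1 := by
        simp only [hg, ContinuousMap.coe_mk, f1 hc]; rfl
      simp only [Set.mem_setOf_eq, this] at hx'
      norm_num at hx'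
    exact hU'sub this

theorem stmt_11 {X Y : Type*} [TopologicalSpace X] [T35Space X]
    [TopologicalSpace Y] [T35Space Y]
    (hX : ∀ I : Ideal C(X, ℝ), I.IsMaximal → ∃ x : X, (I : Set C(X, ℝ)) = {f : C(X, ℝ) | f x = 0})
    (hY : ∀ J : Ideal C(Y, ℝ), J.IsMaximal → ∃ y : Y, (J : Set C(Y, ℝ)) = {g : C(Y, ℝ) | g y = 0})
    (h : Nonempty (C(X, ℝ) ≃+* C(Y, ℝ))) : Nonempty (X ≃ₜ Y) := by
  obtain ⟨φ⟩ := h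
  choose σ hσ using point_map hY φ
  choose τ hτ using point_map hX φ.symm
  have hτ' : ∀ (y : Y) (f : C(X, ℝ)), f (τ y) = φ f y := by
    intro y f; simpa using hτ y f
  have hlr : ∀ x, τ (σ x) = x := by
    intro x
    refine sep_point fun f => ?_
    rw [hτ' (σ x) f, hσ x (φ f)]
    simp
  have hrl : ∀ y, σ (τ y) = y := by
    intro y
    refine sep_point fun g => ?_
    rw [hσ (τ y) g, hτ' y (φ.symm g)]
    simp
  have hσc : Continuous σ := by
    refine cont_of_comp σ fun g => ?_
    have : (fun x => g (σ x)) = fun x => φ.symm g x := funext fun x => hσ x g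
    rw [this]; exact (φ.symm g).continuous
  have hτc : Continuous τ := by
    refine cont_of_comp τ fun f => ?_
    have : (fun y => f (τ y)) = fun y => φ f y := funext fun y => hτ' y f
    rw [this]; exact (φ f).continuous
  exact ⟨⟨⟨σ, τ, hlr, hrl⟩, hσc, hτc⟩⟩
end

section
/- Let X be a Tychonoff space. The maximal ideal space Max(C(X,ℝ)) with the hull-kernel topology is Hausdorff. -/
open ContinuousMap

theorem stmt_18 {X : Type*} [TopologicalSpace X] [T35Space X] :
    T2Space (MaximalSpectrum C(X, ℝ)) := by
  constructor
  intro M N hMN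
  have hsup : (M.asIdeal : Ideal C(X, ℝ)) ⊔ N.asIdeal = ⊤ :=
    Ideal.IsMaximal.coprime_of_ne M.isMaximal N.isMaximal
      (fun h => hMN (MaximalSpectrum.ext h))
  have h1 : (1 : C(X, ℝ)) ∈ (M.asIdeal : Ideal C(X, ℝ)) ⊔ N.asIdeal := by
    rw [hsup]; trivial
  obtain ⟨f, hfM, g, hgN, hfg⟩ := Submodule.mem_sup.mp h1
  set c : C(X, ℝ) := ContinuousMap.const X (1/2) with hc
  set a : C(X, ℝ) := (g - c) ⊔ 0 with ha
  set b : C(X, ℝ) := (f - c) ⊔ 0 with hb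
  have hsum : ∀ x : X, f x + g x = 1 := by
    intro x
    have := congrArg (fun h : C(X, ℝ) => h x) hfg
    simpa using this
  have hab : a * b = 0 := by
    ext x
    simp only [ha, hb, hc, ContinuousMap.mul_apply, ContinuousMap.sup_apply,
      ContinuousMap.sub_apply, ContinuousMap.const_apply, ContinuousMap.zero_apply]
    rcases le_or_gt (f x) (1/2) with h | h
    · have h2 : f x - 1/2 ≤ 0 := by linarith
      rw [sup_of_le_right h2, mul_zero]
    · have h2 : g x - 1/2 ≤ 0 := by linarith [hsum x]
      rw [sup_of_le_right h2, zero_mul]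
  have haM : a ∉ M.asIdeal := by
    intro haM
    have hunit : IsUnit (a + f * f) := by
      rw [ContinuousMap.isUnit_iff_forall_ne_zero]
      intro x
      simp only [ha, hc, ContinuousMap.add_apply, ContinuousMap.mul_apply,
        ContinuousMap.sup_apply, ContinuousMap.sub_apply, ContinuousMap.const_apply,
        ContinuousMap.zero_apply]
      have hge : (0:ℝ) ≤ (g x - 1/2) ⊔ 0 := le_sup_right
      rcases eq_or_ne (f x) 0 with hx | hx
      · have hg1 : g x = 1 := by linarith [hsum x]
        rw [hx, hg1]
        norm_num
      · have hpos : 0 < f x * f x := mul_self_pos.mpr hx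
        positivity
    exact M.isMaximal.ne_top (Ideal.eq_top_of_isUnit_mem _
      (Ideal.add_mem _ haM (Ideal.mul_mem_left _ _ hfM)) hunit)
  have hbN : b ∉ N.asIdeal := by
    intro hbN
    have hunit : IsUnit (b + g * g) := by
      rw [ContinuousMap.isUnit_iff_forall_ne_zero]
      intro x
      simp only [hb, hc, ContinuousMap.add_apply, ContinuousMap.mul_apply,
        ContinuousMap.sup_apply, ContinuousMap.sub_apply, ContinuousMap.const_apply,
        ContinuousMap.zero_apply]
      have hge : (0:ℝ) ≤ (f x - 1/2) ⊔ 0 := le_sup_right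
      rcases eq_or_ne (g x) 0 with hx | hx
      · have hf1 : f x = 1 := by linarith [hsum x]
        rw [hx, hf1]
        norm_num
      · have hpos : 0 < g x * g x := mul_self_pos.mpr hx
        positivity
    exact N.isMaximal.ne_top (Ideal.eq_top_of_isUnit_mem _
      (Ideal.add_mem _ hbN (Ideal.mul_mem_left _ _ hgN)) hunit)
  refine ⟨MaximalSpectrum.toPrimeSpectrum ⁻¹' (PrimeSpectrum.basicOpen a),
    MaximalSpectrum.toPrimeSpectrum ⁻¹' (PrimeSpectrum.basicOpen b),
    (PrimeSpectrum.basicOpen a).isOpen.preimage MaximalSpectrum.toPrimeSpectrum_continuous,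
    (PrimeSpectrum.basicOpen b).isOpen.preimage MaximalSpectrum.toPrimeSpectrum_continuous,
    ?_, ?_, ?_⟩
  · exact haM
  · exact hbN
  · rw [Set.disjoint_left]
    intro P hPa hPb
    have hP : (MaximalSpectrum.toPrimeSpectrum P).asIdeal.IsPrime :=
      (MaximalSpectrum.toPrimeSpectrum P).isPrime
    have : a * b ∈ P.asIdeal := by rw [hab]; exact Ideal.zero_mem _
    rcases hP.mem_or_mem this with h | h
    · exact hPa h
    · exact hPb h
end
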